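/- Let r be a natural number and Q, Q' symmetric r×r matrices over ℤ. Then x ⬝ᵥ (Q.mulVec x) ≡ x ⬝ᵥ (Q'.mulVec x) (mod 4) holds for every bit vector x : Fin r → ℤ (all entries 0 or 1) if and only if there exists an integer matrix Γ whose diagonal entries are all even such that Q' − Q = 2 • Γ. -/

import Mathlib

open Matrix

lemma even_quad_aux {r : ℕ} (Γ : Matrix (Fin r) (Fin r) ℤ) (hs : Γ.IsSymm)
    (hd : ∀ k, 2 ∣ Γ k k) (x : Fin r → ℤ) : 2 ∣ x ⬝ᵥ Γ.mulVec x := by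
  have h0 : ((x ⬝ᵥ Γ.mulVec x : ℤ) : ZMod 2) = 0 := by
    have hsum : (x ⬝ᵥ Γ.mulVec x) = ∑ p : Fin r × Fin r, x p.1 * Γ p.1 p.2 * x p.2 := by
      simp [dotProduct, mulVec, Finset.mul_sum, Fintype.sum_prod_type, mul_assoc]
    rw [hsum]
    push_cast
    refine Finset.sum_involution (fun p _ => (p.2, p.1)) ?_ ?_
      (fun p _ => Finset.mem_univ _) (fun p _ => rfl)
    · intro p _
      have h : ((Γ p.2 p.1 : ℤ) : ZMod 2) = ((Γ p.1 p.2 : ℤ) : ZMod 2) := by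
        rw [hs.apply]
      show (x p.1 : ZMod 2) * (Γ p.1 p.2 : ℤ) * (x p.2 : ℤ)
          + (x p.2 : ZMod 2) * (Γ p.2 p.1 : ℤ) * (x p.1 : ℤ) = 0
      rw [h]
      have : ∀ a b c : ZMod 2, a * b * c + c * b * a = 0 := by decide
      exact this _ _ _
    · intro p _ hf heq
      have h1 : p.2 = p.1 := congrArg Prod.fst heq
      apply hf
      have hz : ((Γ p.1 p.2 : ℤ) : ZMod 2) = 0 := by
        rw [h1]
        exact (ZMod.intCast_zmod_eq_zero_iff_dvd _ 2).mpr (by exact_mod_cast hd p.1)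
      show (x p.1 : ZMod 2) * (Γ p.1 p.2 : ℤ) * (x p.2 : ℤ) = 0
      rw [hz]; ring
  have := (ZMod.intCast_zmod_eq_zero_iff_dvd _ 2).mp h0
  exact_mod_cast this

/-- Two symmetric integer Gram matrices give quadratic forms agreeing mod 4
on all bit vectors iff they differ by twice a matrix with even diagonal. -/
theorem quadratic_form_congr_mod_four_iff
    (r : ℕ) (Q Q' : Matrix (Fin r) (Fin r) ℤ) (hQ : Q.IsSymm) (hQ' : Q'.IsSymm) :
    (∀ x : Fin r → ℤ, (∀ k, x k = 0 ∨ x k = 1) →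
        x ⬝ᵥ Q.mulVec x ≡ x ⬝ᵥ Q'.mulVec x [ZMOD 4])
      ↔ ∃ Γ : Matrix (Fin r) (Fin r) ℤ, (∀ k, 2 ∣ Γ k k) ∧ Q' - Q = (2 : ℤ) • Γ := by
  have hform : ∀ (M : Matrix (Fin r) (Fin r) ℤ) (i j : Fin r),
      (Pi.single i 1 : Fin r → ℤ) ⬝ᵥ M.mulVec (Pi.single j 1) = M i j := by
    intro M i j
    rw [mulVec_single, single_dotProduct]
    simp
  constructor
  · intro H
    set d : Matrix (Fin r) (Fin r) ℤ := Q' - Q with hd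
    have hdiag : ∀ i, 4 ∣ d i i := by
      intro i
      have hx : ∀ k, (Pi.single i 1 : Fin r → ℤ) k = 0 ∨ (Pi.single i 1 : Fin r → ℤ) k = 1 := by
        intro k
        rcases eq_or_ne k i with h | h
        · right; simp [Pi.single_apply, h]
        · left; simp [Pi.single_apply, h]
      have h4 := (H _ hx).dvd
      rw [hform, hform] at h4
      exact h4
    have hoff : ∀ i j, 2 ∣ d i j := by
      intro i j
      rcases eq_or_ne i j with h | h
      · subst h; exact dvd_trans (by norm_num) (hdiag i)
      · set x : Fin r → ℤ := Pi.single i 1 + Pi.single j 1 with hxdef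
        have hx : ∀ k, x k = 0 ∨ x k = 1 := by
          intro k
          rcases eq_or_ne k i with hi | hi
          · right; simp [hxdef, hi, Pi.single_apply, Ne.symm h]
          · rcases eq_or_ne k j with hj | hj
            · right; simp [hxdef, hj, Pi.single_apply, hi, Ne.symm h]
            · left; simp [hxdef, Pi.single_apply, hi, hj]
        have hval : ∀ (M : Matrix (Fin r) (Fin r) ℤ), M.IsSymm →
            x ⬝ᵥ M.mulVec x = M i i + M j j + 2 * M i j := by
          intro M hM
          rw [hxdef]
          rw [mulVec_add, dotProduct_add, add_dotProduct, add_dotProduct]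
          rw [hform, hform, hform, hform, hM.apply i j]
          ring
        have h4 := (H x hx).dvd
        rw [hval Q hQ, hval Q' hQ'] at h4
        have h4' : 4 ∣ d i i + d j j + 2 * d i j := by
          have : Q' i i + Q' j j + 2 * Q' i j - (Q i i + Q j j + 2 * Q i j)
              = d i i + d j j + 2 * d i j := by
            simp [hd, Matrix.sub_apply]; ring
          rwa [this] at h4
        have hi4 := hdiag i
        have hj4 := hdiag j
        omega
    refine ⟨fun i j => d i j / 2, ?_, ?_⟩
    · intro k
      obtain ⟨c, hc⟩ := hdiag k
      show (2:ℤ) ∣ d k k / 2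
      rw [hc, show (4:ℤ)*c = 2*(2*c) by ring, Int.mul_ediv_cancel_left _ two_ne_zero]
      exact ⟨c, rfl⟩
    · ext i j
      show d i j = 2 * (d i j / 2)
      exact (Int.mul_ediv_cancel' (hoff i j)).symm
  · rintro ⟨Γ, hΓd, hΓ⟩ x hx
    have hdsymm : (Q' - Q).IsSymm := hQ'.sub hQ
    have hΓsymm : Γ.IsSymm := by
      have h2 : ((2 : ℤ) • Γ).IsSymm := hΓ ▸ hdsymm
      unfold Matrix.IsSymm at h2 ⊢
      ext i j
      have := congrFun (congrFun h2 i) j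
      simp only [Matrix.transpose_apply, Matrix.smul_apply, smul_eq_mul] at this ⊢
      exact mul_left_cancel₀ two_ne_zero this
    obtain ⟨c, hc⟩ := even_quad_aux Γ hΓsymm hΓd x
    have hdiff : x ⬝ᵥ Q'.mulVec x - x ⬝ᵥ Q.mulVec x = 4 * c := by
      have : x ⬝ᵥ Q'.mulVec x - x ⬝ᵥ Q.mulVec x = x ⬝ᵥ (Q' - Q).mulVec x := by
        rw [Matrix.sub_mulVec, dotProduct_sub]
      rw [this, hΓ, smul_mulVec, dotProduct_smul, smul_eq_mul, hc]
      ring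
    exact Int.modEq_iff_dvd.mpr ⟨c, hdiff⟩
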